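/- Let 0 < a < b. Then there exists a unique r₀ ∈ (a,b) such that 2 log(r₀/b)/log(a/b) − 1/2 = Σ_{m=1}^∞ ((−1)^m + 1)·(r₀^{2m} − (ab)^{2m} r₀^{−2m})/(b^{2m} − a^{2m}); moreover √(ab) < r₀ < a^{1/4} b^{3/4}. -/

import Mathlib

noncomputable def blowTerm (a b r : ℝ) (m : ℕ) : ℝ :=
  ((-1 : ℝ) ^ (m + 1) + 1) *
    (r ^ (2 * (m + 1)) - (a * b) ^ (2 * (m + 1)) * (r ^ (2 * (m + 1)))⁻¹) /
    (b ^ (2 * (m + 1)) - a ^ (2 * (m + 1)))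

theorem blowTerm_even {a b r : ℝ} {m : ℕ} (h : Even m) : blowTerm a b r m = 0 := by
  have : ((-1 : ℝ) ^ (m + 1) + 1) = 0 := by
    rw [(h.add_one).neg_one_pow]; ring
  simp [blowTerm, this]

theorem blowTerm_odd {a b r : ℝ} {m : ℕ} (h : Odd m) :
    blowTerm a b r m = 2 * (r ^ (2 * (m + 1)) - (a * b) ^ (2 * (m + 1)) * (r ^ (2 * (m + 1)))⁻¹) /
      (b ^ (2 * (m + 1)) - a ^ (2 * (m + 1))) := by
  have : ((-1 : ℝ) ^ (m + 1) + 1) = 2 := by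
    rw [(h.add_one).neg_one_pow]; ring
  rw [blowTerm, this]

theorem blowDenom_pos {a b : ℝ} (ha : 0 < a) (hab : a < b) (m : ℕ) :
    0 < b ^ (2 * (m + 1)) - a ^ (2 * (m + 1)) :=
  sub_pos.mpr (pow_lt_pow_left₀ hab ha.le (by positivity))

theorem blowNum_lt {a b r r' : ℝ} (ha : 0 < a) (hb : 0 < b) (hr : 0 < r) (hrr : r < r') (n : ℕ)
    (hn : n ≠ 0) :
    r ^ n - (a * b) ^ n * (r ^ n)⁻¹ < r' ^ n - (a * b) ^ n * (r' ^ n)⁻¹ := by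
  have h1 : r ^ n < r' ^ n := pow_lt_pow_left₀ hrr hr.le hn
  have h2 : (r' ^ n)⁻¹ < (r ^ n)⁻¹ := by
    apply inv_strictAnti₀ (by positivity) h1
  have h3 : (a * b) ^ n * (r' ^ n)⁻¹ < (a * b) ^ n * (r ^ n)⁻¹ :=
    mul_lt_mul_of_pos_left h2 (by positivity)
  linarith

theorem blowTerm_le {a b r r' : ℝ} (ha : 0 < a) (hab : a < b) (hr : 0 < r) (hrr : r < r')
    (m : ℕ) : blowTerm a b r m ≤ blowTerm a b r' m := by
  rcases Nat.even_or_odd m with h | h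
  · rw [blowTerm_even h, blowTerm_even h]
  · rw [blowTerm_odd h, blowTerm_odd h]
    have hb : 0 < b := ha.trans hab
    have hd := blowDenom_pos ha hab m
    have := blowNum_lt ha hb hr hrr (2 * (m + 1)) (by positivity)
    have h2 : (2:ℝ) * (r ^ (2*(m+1)) - (a * b) ^ (2*(m+1)) * (r ^ (2*(m+1)))⁻¹)
        ≤ 2 * (r' ^ (2*(m+1)) - (a * b) ^ (2*(m+1)) * (r' ^ (2*(m+1)))⁻¹) := by linarith
    exact (div_le_div_iff_of_pos_right hd).mpr h2

theorem blowTerm_lt_one {a b r r' : ℝ} (ha : 0 < a) (hab : a < b) (hr : 0 < r) (hrr : r < r') :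
    blowTerm a b r 1 < blowTerm a b r' 1 := by
  have hodd : Odd 1 := odd_one
  rw [blowTerm_odd hodd, blowTerm_odd hodd]
  have hb : 0 < b := ha.trans hab
  have hd := blowDenom_pos ha hab 1
  have := blowNum_lt ha hb hr hrr (2 * (1 + 1)) (by norm_num)
  exact div_lt_div_of_pos_right (by linarith) hd

theorem blowTerm_sqrt {a b : ℝ} (ha : 0 < a) (hb : 0 < b) (m : ℕ) :
    blowTerm a b (Real.sqrt (a * b)) m = 0 := by
  have hab : (0:ℝ) ≤ a * b := by positivity
  have h2 : Real.sqrt (a * b) ^ 2 = a * b := Real.sq_sqrt hab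
  have hpow : Real.sqrt (a * b) ^ (2 * (m + 1)) = (a * b) ^ (m + 1) := by
    rw [pow_mul, h2]
  have hne : (a * b) ^ (m + 1) ≠ 0 := by positivity
  have hnum : (a*b) ^ (2 * (m + 1)) * ((a*b) ^ (m + 1))⁻¹ = (a*b) ^ (m+1) := by
    rw [two_mul, pow_add]
    field_simp
  rw [blowTerm, hpow, hnum]
  simp

theorem blowTerm_nonneg {a b r : ℝ} (ha : 0 < a) (hab : a < b) (hr : Real.sqrt (a * b) ≤ r)
    (m : ℕ) : 0 ≤ blowTerm a b r m := by
  rcases Nat.even_or_odd m with h | h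
  · rw [blowTerm_even h]
  · have hb : 0 < b := ha.trans hab
    have hs : 0 < Real.sqrt (a * b) := Real.sqrt_pos.mpr (by positivity)
    rcases hr.eq_or_lt with he | hlt
    · rw [← he, blowTerm_sqrt ha hb]
    · have := blowTerm_le ha hab hs hlt m
      rwa [blowTerm_sqrt ha hb] at this

theorem blowTerm_pos_one {a b r : ℝ} (ha : 0 < a) (hab : a < b) (hr : Real.sqrt (a * b) < r) :
    0 < blowTerm a b r 1 := by
  have hb : 0 < b := ha.trans hab
  have hs : 0 < Real.sqrt (a * b) := Real.sqrt_pos.mpr (by positivity)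
  have := blowTerm_lt_one ha hab hs hr
  rwa [blowTerm_sqrt ha hb] at this

theorem blowTerm_abs_le {a b r : ℝ} (ha : 0 < a) (hab : a < b) (hr : 0 < r) (m : ℕ) :
    |blowTerm a b r m| ≤ 2 / (1 - (a / b) ^ 2) *
      (((r / b) ^ 2) ^ (m + 1) + ((a / r) ^ 2) ^ (m + 1)) := by
  have hb : 0 < b := ha.trans hab
  have hc : 0 < 1 - (a / b) ^ 2 := by
    have : a / b < 1 := (div_lt_one hb).mpr hab
    have h0 : 0 < a / b := by positivity
    nlinarith
  set n := 2 * (m + 1) with hn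
  have hd := blowDenom_pos ha hab m
  -- denominator lower bound
  have hdb : b ^ n * (1 - (a / b) ^ 2) ≤ b ^ n - a ^ n := by
    have h1 : (a / b) ^ n ≤ (a / b) ^ 2 := by
      apply pow_le_pow_of_le_one (by positivity) ((div_le_one hb).mpr hab.le)
      omega
    have h2 : b ^ n * (a / b) ^ n = a ^ n := by
      rw [div_pow]; field_simp
    nlinarith [pow_pos hb n]
  -- numerator bound
  have hnum : |r ^ n - (a * b) ^ n * (r ^ n)⁻¹| ≤ r ^ n + (a * b) ^ n * (r ^ n)⁻¹ := by
    have h1 : 0 < r ^ n := by positivity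
    have h2 : 0 < (a * b) ^ n * (r ^ n)⁻¹ := by positivity
    rw [abs_sub_le_iff]
    constructor <;> linarith
  have hcoeff : |((-1 : ℝ) ^ (m + 1) + 1)| ≤ 2 := by
    rcases Nat.even_or_odd (m + 1) with h | h
    · rw [h.neg_one_pow]; norm_num
    · rw [h.neg_one_pow]; norm_num
  have key : |blowTerm a b r m| ≤ 2 * (r ^ n + (a * b) ^ n * (r ^ n)⁻¹) / (b ^ n - a ^ n) := by
    rw [blowTerm, abs_div, abs_of_pos hd, abs_mul]
    apply (div_le_div_iff_of_pos_right hd).mpr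
    calc |(-1 : ℝ) ^ (m + 1) + 1| * |r ^ n - (a * b) ^ n * (r ^ n)⁻¹|
        ≤ 2 * |r ^ n - (a * b) ^ n * (r ^ n)⁻¹| :=
          mul_le_mul_of_nonneg_right hcoeff (abs_nonneg _)
      _ ≤ 2 * (r ^ n + (a * b) ^ n * (r ^ n)⁻¹) := by linarith
  refine key.trans ?_
  have hNnn : 0 ≤ 2 * (r ^ n + (a * b) ^ n * (r ^ n)⁻¹) := by positivity
  have step : 2 * (r ^ n + (a * b) ^ n * (r ^ n)⁻¹) / (b ^ n - a ^ n)
      ≤ 2 * (r ^ n + (a * b) ^ n * (r ^ n)⁻¹) / (b ^ n * (1 - (a / b) ^ 2)) := by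
    apply div_le_div_of_nonneg_left hNnn (by positivity) hdb
  refine step.trans (le_of_eq ?_)
  have h1 : ((r / b) ^ 2) ^ (m + 1) = r ^ n / b ^ n := by
    rw [← pow_mul, ← hn, div_pow]
  have h2 : ((a / r) ^ 2) ^ (m + 1) = a ^ n / r ^ n := by
    rw [← pow_mul, ← hn, div_pow]
  rw [h1, h2, mul_pow]
  have hbn : (b:ℝ) ^ n ≠ 0 := by positivity
  have hrn : (r:ℝ) ^ n ≠ 0 := by positivity
  field_simp

theorem summable_geom_succ {p : ℝ} (h0 : 0 ≤ p) (h1 : p < 1) :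
    Summable fun m : ℕ => p ^ (m + 1) := by
  have := (summable_geometric_of_lt_one h0 h1).mul_right p
  refine this.congr fun m => ?_
  rw [pow_succ]

theorem summable_blowBound {a b : ℝ} {P Q : ℝ} (hc : 0 < 1 - (a / b) ^ 2)
    (hP0 : 0 ≤ P) (hP : P < 1) (hQ0 : 0 ≤ Q) (hQ : Q < 1) :
    Summable fun m : ℕ => 2 / (1 - (a / b) ^ 2) * (P ^ (m + 1) + Q ^ (m + 1)) :=
  ((summable_geom_succ hP0 hP).add (summable_geom_succ hQ0 hQ)).mul_left _

theorem summable_blowTerm {a b r : ℝ} (ha : 0 < a) (hab : a < b) (har : a < r) (hrb : r < b) :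
    Summable (blowTerm a b r) := by
  have hb : 0 < b := ha.trans hab
  have hr : 0 < r := ha.trans har
  have hc : 0 < 1 - (a / b) ^ 2 := by
    have h1 : a / b < 1 := (div_lt_one hb).mpr hab
    have h0 : 0 < a / b := by positivity
    nlinarith
  have hP : (r / b) ^ 2 < 1 := by
    have : r / b < 1 := (div_lt_one hb).mpr hrb
    have h0 : 0 < r / b := by positivity
    nlinarith
  have hQ : (a / r) ^ 2 < 1 := by
    have : a / r < 1 := (div_lt_one hr).mpr har
    have h0 : 0 < a / r := by positivity
    nlinarith
  refine summable_abs_iff.mp (Summable.of_nonneg_of_le (fun m => abs_nonneg _)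
    (fun m => blowTerm_abs_le ha hab hr m)
    (summable_blowBound hc (by positivity) hP (by positivity) hQ))

theorem a_lt_sqrt_ab {a b : ℝ} (ha : 0 < a) (hab : a < b) : a < Real.sqrt (a * b) :=
  (Real.lt_sqrt ha.le).mpr (by nlinarith)

theorem sqrt_ab_lt_t {a b : ℝ} (ha : 0 < a) (hab : a < b) :
    Real.sqrt (a * b) < a ^ ((1 : ℝ) / 4) * b ^ ((3 : ℝ) / 4) := by
  have hb : 0 < b := ha.trans hab
  have hs : Real.sqrt (a * b) = a ^ ((1:ℝ)/4) * a ^ ((1:ℝ)/4) * b ^ ((1:ℝ)/2) := by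
    rw [Real.sqrt_eq_rpow, Real.mul_rpow ha.le hb.le, ← Real.rpow_add ha]
    norm_num
  have ht : a ^ ((1 : ℝ) / 4) * b ^ ((3 : ℝ) / 4) =
      a ^ ((1:ℝ)/4) * b ^ ((1:ℝ)/4) * b ^ ((1:ℝ)/2) := by
    rw [mul_assoc, ← Real.rpow_add hb]
    norm_num
  rw [hs, ht]
  have h14 : a ^ ((1:ℝ)/4) < b ^ ((1:ℝ)/4) := Real.rpow_lt_rpow ha.le hab (by norm_num)
  have hpa : (0:ℝ) < a ^ ((1:ℝ)/4) := Real.rpow_pos_of_pos ha _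
  have hpb : (0:ℝ) < b ^ ((1:ℝ)/2) := Real.rpow_pos_of_pos hb _
  exact mul_lt_mul_of_pos_right (mul_lt_mul_of_pos_left h14 hpa) hpb

theorem t_lt_b {a b : ℝ} (ha : 0 < a) (hab : a < b) :
    a ^ ((1 : ℝ) / 4) * b ^ ((3 : ℝ) / 4) < b := by
  have hb : 0 < b := ha.trans hab
  have h14 : a ^ ((1:ℝ)/4) < b ^ ((1:ℝ)/4) := Real.rpow_lt_rpow ha.le hab (by norm_num)
  have hpb : (0:ℝ) < b ^ ((3:ℝ)/4) := Real.rpow_pos_of_pos hb _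
  calc a ^ ((1 : ℝ) / 4) * b ^ ((3 : ℝ) / 4) < b ^ ((1:ℝ)/4) * b ^ ((3:ℝ)/4) :=
        mul_lt_mul_of_pos_right h14 hpb
    _ = b := by rw [← Real.rpow_add hb]; norm_num

theorem log_sqrt_ab {a b : ℝ} (ha : 0 < a) (hab : a < b) :
    Real.log (Real.sqrt (a * b) / b) = Real.log (a / b) / 2 := by
  have hb : 0 < b := ha.trans hab
  have hs : 0 < Real.sqrt (a * b) := Real.sqrt_pos.mpr (by positivity)
  rw [Real.log_div hs.ne' hb.ne', Real.log_sqrt (by positivity),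
    Real.log_mul ha.ne' hb.ne', Real.log_div ha.ne' hb.ne']
  ring

theorem log_t_ab {a b : ℝ} (ha : 0 < a) (hab : a < b) :
    Real.log (a ^ ((1 : ℝ) / 4) * b ^ ((3 : ℝ) / 4) / b) = Real.log (a / b) / 4 := by
  have hb : 0 < b := ha.trans hab
  have hpa : (0:ℝ) < a ^ ((1:ℝ)/4) := Real.rpow_pos_of_pos ha _
  have hpb : (0:ℝ) < b ^ ((3:ℝ)/4) := Real.rpow_pos_of_pos hb _
  rw [Real.log_div (by exact (mul_pos hpa hpb).ne') hb.ne', Real.log_mul hpa.ne' hpb.ne',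
    Real.log_rpow ha, Real.log_rpow hb, Real.log_div ha.ne' hb.ne']
  ring

theorem log_ab_neg {a b : ℝ} (ha : 0 < a) (hab : a < b) : Real.log (a / b) < 0 :=
  Real.log_neg (div_pos ha (ha.trans hab)) ((div_lt_one (ha.trans hab)).mpr hab)

theorem continuousOn_blowSum {a b s t : ℝ} (ha : 0 < a) (hab : a < b)
    (has : a < s) (hst : s ≤ t) (htb : t < b) :
    ContinuousOn (fun r => ∑' m, blowTerm a b r m) (Set.Icc s t) := by
  have hb : 0 < b := ha.trans hab
  have hs : 0 < s := ha.trans has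
  have hc : 0 < 1 - (a / b) ^ 2 := by
    have h1 : a / b < 1 := (div_lt_one hb).mpr hab
    have h0 : 0 < a / b := by positivity
    nlinarith
  have ht0 : 0 < t := hs.trans_le hst
  have hP : (t / b) ^ 2 < 1 := by
    have h1 : t / b < 1 := (div_lt_one hb).mpr htb
    have h0 : 0 < t / b := by positivity
    nlinarith
  have hQ : (a / s) ^ 2 < 1 := by
    have h1 : a / s < 1 := (div_lt_one hs).mpr has
    have h0 : 0 < a / s := by positivity
    nlinarith
  have hPabs : ∀ x : ℝ, (0:ℝ) ≤ (t/b)^2 := fun _ => sq_nonneg _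
  apply continuousOn_tsum (u := fun m : ℕ =>
      2 / (1 - (a / b) ^ 2) * (((t / b) ^ 2) ^ (m + 1) + ((a / s) ^ 2) ^ (m + 1)))
  · intro i
    have hinv : ContinuousOn (fun r : ℝ => (r ^ (2 * (i + 1)))⁻¹) (Set.Icc s t) := by
      apply ContinuousOn.inv₀ (continuous_pow _).continuousOn
      intro x hx
      have : 0 < x := hs.trans_le hx.1
      positivity
    exact (continuousOn_const.mul (((continuous_pow _).continuousOn).sub
      (continuousOn_const.mul hinv))).div_const _
  · exact summable_blowBound hc (sq_nonneg _) hP (sq_nonneg _) hQ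
  · intro n x hx
    have hx0 : 0 < x := hs.trans_le hx.1
    rw [Real.norm_eq_abs]
    refine (blowTerm_abs_le ha hab hx0 n).trans ?_
    gcongr
    · exact hx.2
    · exact hx.1


/-- Let `0 < a < b`.  There exists a unique `r₀ ∈ (a, b)` such that
`2 log(r₀/b)/log(a/b) - 1/2
  = Σ_{m≥1} ((-1)^m + 1)(r₀^{2m} - (ab)^{2m} r₀^{-2m})/(b^{2m} - a^{2m})`;
moreover `√(ab) < r₀ < a^{1/4} b^{3/4}`. -/
theorem exists_unique_blowup_modulus (a b : ℝ) (ha : 0 < a) (hab : a < b) :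
    ∃ r₀ ∈ Set.Ioo a b,
      (2 * Real.log (r₀ / b) / Real.log (a / b) - 1 / 2 =
        ∑' m : ℕ, ((-1 : ℝ) ^ (m + 1) + 1) *
          (r₀ ^ (2 * (m + 1)) - (a * b) ^ (2 * (m + 1)) * (r₀ ^ (2 * (m + 1)))⁻¹) /
          (b ^ (2 * (m + 1)) - a ^ (2 * (m + 1)))) ∧
      Real.sqrt (a * b) < r₀ ∧ r₀ < a ^ ((1 : ℝ) / 4) * b ^ ((3 : ℝ) / 4) ∧
      ∀ r ∈ Set.Ioo a b,
        (2 * Real.log (r / b) / Real.log (a / b) - 1 / 2 =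
          ∑' m : ℕ, ((-1 : ℝ) ^ (m + 1) + 1) *
            (r ^ (2 * (m + 1)) - (a * b) ^ (2 * (m + 1)) * (r ^ (2 * (m + 1)))⁻¹) /
            (b ^ (2 * (m + 1)) - a ^ (2 * (m + 1)))) → r = r₀ := by
  have hb : 0 < b := ha.trans hab
  have hconv : ∀ r : ℝ, (∑' m : ℕ, ((-1 : ℝ) ^ (m + 1) + 1) *
      (r ^ (2 * (m + 1)) - (a * b) ^ (2 * (m + 1)) * (r ^ (2 * (m + 1)))⁻¹) /
      (b ^ (2 * (m + 1)) - a ^ (2 * (m + 1)))) = ∑' m, blowTerm a b r m := fun r => rfl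
  have hL : Real.log (a / b) < 0 := log_ab_neg ha hab
  have hL0 : Real.log (a / b) ≠ 0 := hL.ne
  have has : a < Real.sqrt (a * b) := a_lt_sqrt_ab ha hab
  have hst : Real.sqrt (a * b) < a ^ ((1 : ℝ) / 4) * b ^ ((3 : ℝ) / 4) := sqrt_ab_lt_t ha hab
  have htb : a ^ ((1 : ℝ) / 4) * b ^ ((3 : ℝ) / 4) < b := t_lt_b ha hab
  set s := Real.sqrt (a * b)
  set t := a ^ ((1 : ℝ) / 4) * b ^ ((3 : ℝ) / 4)
  set h : ℝ → ℝ := fun r =>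
    2 * Real.log (r / b) / Real.log (a / b) - 1 / 2 - ∑' m, blowTerm a b r m with hh
  -- strict antitonicity on Ioo a b
  have hanti : ∀ x ∈ Set.Ioo a b, ∀ y ∈ Set.Ioo a b, x < y → h y < h x := by
    intro x hx y hy hxy
    have hx0 : 0 < x := ha.trans hx.1
    have hGy : 2 * Real.log (y / b) / Real.log (a / b)
        < 2 * Real.log (x / b) / Real.log (a / b) := by
      have hlog : Real.log (x / b) < Real.log (y / b) :=
        Real.log_lt_log (div_pos hx0 hb) (by gcongr)
      have hinv : (Real.log (a / b))⁻¹ < 0 := inv_lt_zero.mpr hL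
      have := mul_lt_mul_of_neg_right
        (by linarith : 2 * Real.log (x / b) < 2 * Real.log (y / b)) hinv
      simpa [div_eq_mul_inv] using this
    have hFxy : (∑' m, blowTerm a b x m) < ∑' m, blowTerm a b y m :=
      Summable.tsum_lt_tsum (fun m => blowTerm_le ha hab hx0 hxy m)
        (blowTerm_lt_one ha hab hx0 hxy)
        (summable_blowTerm ha hab hx.1 hx.2) (summable_blowTerm ha hab hy.1 hy.2)
    simp only [hh]
    linarith
  -- continuity
  have hcont : ContinuousOn h (Set.Icc s t) := by
    have h1 : ContinuousOn (fun r : ℝ => Real.log (r / b)) (Set.Icc s t) := by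
      apply ContinuousOn.log (continuousOn_id.div_const b)
      intro x hx
      have : 0 < x := (ha.trans (has.trans_le hx.1))
      positivity
    exact (((continuousOn_const.mul h1).div_const _).sub continuousOn_const).sub
      (continuousOn_blowSum ha hab has hst.le htb)
  -- endpoint values
  have hhs : h s = 1 / 2 := by
    have hz : (∑' m, blowTerm a b s m) = 0 := by
      simp [s, blowTerm_sqrt ha hb]
    simp only [hh]
    rw [hz, log_sqrt_ab ha hab]
    field_simp
    ring
  have hht : h t < 0 := by
    have hFt : 0 < ∑' m, blowTerm a b t m :=
      Summable.tsum_pos (summable_blowTerm ha hab (has.trans hst) htb)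
        (fun m => blowTerm_nonneg ha hab hst.le m) 1 (blowTerm_pos_one ha hab hst)
    have hval : 2 * Real.log (t / b) / Real.log (a / b) = 1 / 2 := by
      rw [log_t_ab ha hab]
      field_simp
      ring
    simp only [hh]
    rw [hval]
    linarith
  -- IVT
  have hmem : (0 : ℝ) ∈ Set.Icc (h t) (h s) := ⟨hht.le, by rw [hhs]; norm_num⟩
  obtain ⟨r₀, hr₀mem, hr₀⟩ := intermediate_value_Icc' hst.le hcont hmem
  have hr₀s : s < r₀ := by
    rcases hr₀mem.1.eq_or_lt with he | h'
    · exfalso; rw [he, hr₀] at hhs; norm_num at hhs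
    · exact h'
  have hr₀t : r₀ < t := by
    rcases hr₀mem.2.eq_or_lt with he | h'
    · exfalso; rw [← he, hr₀] at hht; norm_num at hht
    · exact h'
  have hr₀ab : r₀ ∈ Set.Ioo a b := ⟨has.trans hr₀s, hr₀t.trans htb⟩
  have heq0 : ∀ r, h r = 0 ↔ (2 * Real.log (r / b) / Real.log (a / b) - 1 / 2 =
      ∑' m, blowTerm a b r m) := by
    intro r
    simp only [hh]
    constructor <;> intro hr <;> linarith
  refine ⟨r₀, hr₀ab, ?_, hr₀s, hr₀t, ?_⟩
  · rw [hconv]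
    exact (heq0 r₀).mp hr₀
  · intro r hr hreq
    rw [hconv] at hreq
    have hr0 : h r = 0 := (heq0 r).mpr hreq
    rcases lt_trichotomy r r₀ with hlt | heq | hgt
    · exfalso
      have := hanti r hr r₀ hr₀ab hlt
      rw [hr₀, hr0] at this
      exact lt_irrefl 0 this
    · exact heq
    · exfalso
      have := hanti r₀ hr₀ab r hr hgt
      rw [hr₀, hr0] at this
      exact lt_irrefl 0 this
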